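/- With the hypotheses of a Rokhlin system, ⋃_{n∈ℤ} hⁿ(Y) equals the disjoint union over l = 0,…,m and j = 0,…,r_l−1 of the sets h^j(T_l^0); in particular, with N = r_m, ⋃_{n∈ℤ} hⁿ(Y) = ⋃_{n=0}^{N−1} hⁿ(Y), which is compact. -/

import Mathlib

open Set

section RokAux
variable {X : Type*} [MetricSpace X] [CompactSpace X]

private lemma rok_cover0 {m : ℕ} {T : Fin (m + 1) → Set X} {Y : Set X}
    (hcover : (⋃ l, T l) = Y) :
    Y ⊆ ⋃ l, (T l \ ⋃ i, ⋃ _ : i < l, T i) := by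
  classical
  intro y hy
  have hy' : y ∈ ⋃ l, T l := hcover ▸ hy
  obtain ⟨l, hl⟩ := mem_iUnion.1 hy'
  have hex : ∃ n : ℕ, ∃ hn : n < m + 1, y ∈ T ⟨n, hn⟩ := ⟨l, l.isLt, by simpa using hl⟩
  obtain ⟨hn0, hmem⟩ := Nat.find_spec hex
  refine mem_iUnion.2 ⟨⟨Nat.find hex, hn0⟩, hmem, ?_⟩
  simp only [mem_iUnion, not_exists]
  intro i hi hyi
  exact Nat.find_min hex hi ⟨i.isLt, by simpa using hyi⟩

private lemma rok_return {m : ℕ} {T : Fin (m + 1) → Set X} {Y : Set X}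
    (h : X ≃ₜ X) (r : Fin (m + 1) → ℕ)
    (hcover : (⋃ l, T l) = Y) (hrpos : ∀ l, 1 ≤ r l)
    (hret : ∀ l, (⇑h)^[r l] '' T l ⊆ Y)
    (hfirst : ∀ l : Fin (m + 1), ∀ y ∈ T l \ ⋃ j, ⋃ _ : j < l, T j,
      ∀ n, 1 ≤ n → n < r l → (⇑h)^[n] y ∉ Y) :
    ∀ j : ℕ, ∀ x ∈ Y, 1 ≤ j → (⇑h)^[j] x ∈ Y →
      (⇑h)^[j] x ∈ ⋃ l, (⇑h)^[r l] '' (T l \ ⋃ i, ⋃ _ : i < l, T i) := by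
  intro j
  induction j using Nat.strong_induction_on with
  | _ j ih =>
    intro x hx hj hxj
    obtain ⟨l, hl⟩ := mem_iUnion.1 (rok_cover0 hcover hx)
    rcases lt_trichotomy j (r l) with hlt | heq | hgt
    · exact absurd hxj (hfirst l x hl j hj hlt)
    · exact mem_iUnion.2 ⟨l, ⟨x, hl, by rw [heq]⟩⟩
    · have hx' : (⇑h)^[r l] x ∈ Y := hret l ⟨x, hl.1, rfl⟩
      have hsum : j = (j - r l) + r l := (Nat.sub_add_cancel hgt.le).symm
      have hxj' : (⇑h)^[j - r l] ((⇑h)^[r l] x) ∈ Y := by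
        rw [← Function.iterate_add_apply, ← hsum]; exact hxj
      have := ih (j - r l) (by have := hrpos l; omega) _ hx'
        (by have := hrpos l; omega) hxj'
      rwa [← Function.iterate_add_apply, ← hsum] at this

private lemma rok_forward {m : ℕ} {T : Fin (m + 1) → Set X} {Y : Set X}
    (h : X ≃ₜ X) (r : Fin (m + 1) → ℕ)
    (hcover : (⋃ l, T l) = Y) (hrpos : ∀ l, 1 ≤ r l)
    (hret : ∀ l, (⇑h)^[r l] '' T l ⊆ Y) :
    ∀ n : ℕ, ∀ x ∈ Y, 1 ≤ n →
      (⇑h)^[n] x ∈ ⋃ l, ⋃ j, ⋃ _ : 1 ≤ j ∧ j ≤ r l, (⇑h)^[j] '' T l := by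
  intro n
  induction n using Nat.strong_induction_on with
  | _ n ih =>
    intro x hx hn
    obtain ⟨l, hl⟩ := mem_iUnion.1 (show x ∈ ⋃ l, T l from hcover ▸ hx)
    rcases le_or_gt n (r l) with hle | hgt
    · exact mem_iUnion.2 ⟨l, mem_iUnion.2 ⟨n, mem_iUnion.2 ⟨⟨hn, hle⟩, ⟨x, hl, rfl⟩⟩⟩⟩
    · have hx' : (⇑h)^[r l] x ∈ Y := hret l ⟨x, hl, rfl⟩
      have hsum : n = (n - r l) + r l := (Nat.sub_add_cancel hgt.le).symm
      have := ih (n - r l) (by have := hrpos l; omega) _ hx' (by have := hrpos l; omega)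
      rwa [← Function.iterate_add_apply, ← hsum] at this

private lemma rok_YsubR {m : ℕ} {T : Fin (m + 1) → Set X} {Y : Set X}
    (h : X ≃ₜ X) (r : Fin (m + 1) → ℕ)
    (hYrec : Y ⊆ closure (⋃ n : ℕ, ⋃ _ : 1 ≤ n, (⇑h)^[n] '' Y))
    (hTcomp : ∀ l, IsCompact (T l)) (hTY : ∀ l, T l ⊆ Y)
    (hcover : (⋃ l, T l) = Y) (hrpos : ∀ l, 1 ≤ r l)
    (hret : ∀ l, (⇑h)^[r l] '' T l ⊆ Y)
    (hfirst : ∀ l : Fin (m + 1), ∀ y ∈ T l \ ⋃ j, ⋃ _ : j < l, T j,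
      ∀ n, 1 ≤ n → n < r l → (⇑h)^[n] y ∉ Y) :
    Y ⊆ ⋃ l, (⇑h)^[r l] '' (T l \ ⋃ i, ⋃ _ : i < l, T i) := by
  intro y hy
  have hclosed : IsClosed (⋃ l, ⋃ j, ⋃ _ : 1 ≤ j ∧ j ≤ r l, (⇑h)^[j] '' T l) := by
    apply isClosed_iUnion_of_finite
    intro l
    exact Set.Finite.isClosed_biUnion (Set.finite_Icc 1 (r l))
      (fun j _ => ((hTcomp l).image (h.continuous.iterate j)).isClosed)
  have hsub : (⋃ n : ℕ, ⋃ _ : 1 ≤ n, (⇑h)^[n] '' Y)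
      ⊆ ⋃ l, ⋃ j, ⋃ _ : 1 ≤ j ∧ j ≤ r l, (⇑h)^[j] '' T l := by
    rintro x hx
    simp only [mem_iUnion] at hx
    obtain ⟨n, hn, z, hz, rfl⟩ := hx
    exact rok_forward h r hcover hrpos hret n z hz hn
  have hyS := (closure_minimal hsub hclosed) (hYrec hy)
  simp only [mem_iUnion] at hyS
  obtain ⟨l, j, ⟨hj1, hj2⟩, z, hz, rfl⟩ := hyS
  exact rok_return h r hcover hrpos hret hfirst j z (hTY l hz) hj1 hy

private lemma rok_nodup {m : ℕ} {T : Fin (m + 1) → Set X} {Y : Set X}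
    (h : X ≃ₜ X) (r : Fin (m + 1) → ℕ)
    (hTY : ∀ l, T l ⊆ Y)
    (hfirst : ∀ l : Fin (m + 1), ∀ y ∈ T l \ ⋃ j, ⋃ _ : j < l, T j,
      ∀ n, 1 ≤ n → n < r l → (⇑h)^[n] y ∉ Y) :
    ∀ (l l' : Fin (m + 1)) (j j' : ℕ), j ≤ j' → j' < r l' →
      ∀ z ∈ T l \ ⋃ i, ⋃ _ : i < l, T i, ∀ z' ∈ T l' \ ⋃ i, ⋃ _ : i < l', T i,
      (⇑h)^[j] z = (⇑h)^[j'] z' → j = j' ∧ z = z' := by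
  intro l l' j j' hle hj' z hz z' hz' heq
  rcases eq_or_lt_of_le hle with rfl | hlt
  · exact ⟨rfl, h.injective.iterate j heq⟩
  · exfalso
    have hz'' : (⇑h)^[j' - j] z' = z := by
      apply h.injective.iterate j
      rw [← Function.iterate_add_apply, Nat.add_sub_cancel' hle]
      exact heq.symm
    exact hfirst l' z' hz' (j' - j) (by omega) (by omega)
      (by rw [hz'']; exact hTY l hz.1)

end RokAux

/-- A statement about a Rokhlin system of towers for `(X, h, Y)`. -/
theorem stmt_5 {X : Type*} [MetricSpace X] [CompactSpace X] (h : X ≃ₜ X)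
    (Y : Set X) (hYne : Y.Nonempty) (hYcomp : IsCompact Y)
    (hYrec : Y ⊆ closure (⋃ n : ℕ, ⋃ _ : 1 ≤ n, (⇑h)^[n] '' Y))
    (m : ℕ) (T : Fin (m + 1) → Set X) (r : Fin (m + 1) → ℕ)
    (hTne : ∀ l, (T l).Nonempty) (hTcomp : ∀ l, IsCompact (T l))
    (hTY : ∀ l, T l ⊆ Y) (hcover : (⋃ l, T l) = Y)
    (hrpos : ∀ l, 1 ≤ r l) (hrmono : Monotone r)
    (hret : ∀ l, (⇑h)^[r l] '' T l ⊆ Y)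
    (hfirst : ∀ l : Fin (m + 1), ∀ y ∈ T l \ ⋃ j, ⋃ _ : j < l, T j,
      ∀ n, 1 ≤ n → n < r l → (⇑h)^[n] y ∉ Y)
    (hrealized : ∀ l, ∃ y ∈ Y, (⇑h)^[r l] y ∈ Y ∧
      ∀ n, 1 ≤ n → n < r l → (⇑h)^[n] y ∉ Y) :
    (⋃ n : ℤ, ⇑(h.toEquiv ^ n) '' Y)
        = (⋃ l, ⋃ j : ℕ, ⋃ _ : j < r l, (⇑h)^[j] '' (T l \ ⋃ i, ⋃ _ : i < l, T i)) ∧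
      (∀ l l' : Fin (m + 1), ∀ j j' : ℕ, j < r l → j' < r l' → (l, j) ≠ (l', j') →
        Disjoint ((⇑h)^[j] '' (T l \ ⋃ i, ⋃ _ : i < l, T i))
          ((⇑h)^[j'] '' (T l' \ ⋃ i, ⋃ _ : i < l', T i))) ∧
      (⋃ n : ℤ, ⇑(h.toEquiv ^ n) '' Y)
        = (⋃ n : ℕ, ⋃ _ : n < r (Fin.last m), (⇑h)^[n] '' Y) ∧
      IsCompact (⋃ n : ℤ, ⇑(h.toEquiv ^ n) '' Y) := by
  classical
  set U : Set X := ⋃ l, ⋃ j : ℕ, ⋃ _ : j < r l, (⇑h)^[j] '' (T l \ ⋃ i, ⋃ _ : i < l, T i)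
    with hU
  have hT0Y : ∀ l, (T l \ ⋃ i, ⋃ _ : i < l, T i) ⊆ Y :=
    fun l => Set.diff_subset.trans (hTY l)
  have hYU : Y ⊆ U := by
    intro y hy
    obtain ⟨l, hl⟩ := mem_iUnion.1 (rok_cover0 hcover hy)
    exact mem_iUnion.2 ⟨l, mem_iUnion.2 ⟨0, mem_iUnion.2 ⟨hrpos l, ⟨y, hl, rfl⟩⟩⟩⟩
  have hc : ∀ n : ℕ, ⇑(h.toEquiv ^ (n : ℤ)) = (⇑h)^[n] := by
    intro n
    rw [zpow_natCast, ← Equiv.Perm.iterate_eq_pow]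
    rfl
  have hUfwd : ∀ x ∈ U, h x ∈ U := by
    intro x hx
    simp only [hU, mem_iUnion] at hx
    obtain ⟨l, j, hj, z, hz, rfl⟩ := hx
    rw [← Function.iterate_succ_apply' (⇑h) j z]
    rcases lt_or_eq_of_le (Nat.succ_le_of_lt hj) with hlt | heqr
    · exact mem_iUnion.2 ⟨l, mem_iUnion.2 ⟨j + 1, mem_iUnion.2 ⟨hlt, ⟨z, hz, rfl⟩⟩⟩⟩
    · refine hYU ?_
      rw [heqr]
      exact hret l ⟨z, hz.1, rfl⟩
  have hUbwd : ∀ x ∈ U, h.symm x ∈ U := by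
    intro x hx
    simp only [hU, mem_iUnion] at hx
    obtain ⟨l, j, hj, z, hz, rfl⟩ := hx
    rcases Nat.eq_zero_or_pos j with rfl | hjpos
    · have hzY : z ∈ Y := hT0Y l hz
      have hzR := rok_YsubR h r hYrec hTcomp hTY hcover hrpos hret hfirst hzY
      simp only [mem_iUnion] at hzR
      obtain ⟨l', w, hw, hwz⟩ := hzR
      have e1 : h ((⇑h)^[r l' - 1] w) = z := by
        have h1 : (⇑h)^[r l' - 1 + 1] w = z := by
          rw [show r l' - 1 + 1 = r l' from by have := hrpos l'; omega]
          exact hwz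
        rw [← h1, Function.iterate_succ_apply']
      have e2 : h.symm ((⇑h)^[0] z) = (⇑h)^[r l' - 1] w := by
        simp only [Function.iterate_zero_apply]
        rw [← e1, Homeomorph.symm_apply_apply]
      rw [e2]
      exact mem_iUnion.2 ⟨l', mem_iUnion.2 ⟨r l' - 1,
        mem_iUnion.2 ⟨by have := hrpos l'; omega, ⟨w, hw, rfl⟩⟩⟩⟩
    · have e : h.symm ((⇑h)^[j] z) = (⇑h)^[j - 1] z := by
        conv_lhs => rw [show j = (j - 1) + 1 from by omega, Function.iterate_succ_apply']
        rw [Homeomorph.symm_apply_apply]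
      rw [e]
      exact mem_iUnion.2 ⟨l, mem_iUnion.2 ⟨j - 1, mem_iUnion.2 ⟨by omega, ⟨z, hz, rfl⟩⟩⟩⟩
  have hzpow : ∀ n : ℤ, ∀ x ∈ U, (h.toEquiv ^ n) x ∈ U := by
    intro n
    induction n using Int.induction_on with
    | zero => simpa using fun x hx => hx
    | succ k ih =>
        intro x hx
        have e : (h.toEquiv ^ ((k : ℤ) + 1)) x = (h.toEquiv ^ (k : ℤ)) (h.toEquiv x) := by
          rw [zpow_add_one]; rfl
        rw [e]
        exact ih _ (hUfwd x hx)
    | pred k ih =>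
        intro x hx
        have e : (h.toEquiv ^ (-(k : ℤ) - 1)) x = (h.toEquiv ^ (-(k : ℤ))) (h.toEquiv⁻¹ x) := by
          rw [zpow_sub_one]; rfl
        rw [e]
        exact ih _ (hUbwd x hx)
  have hZU : (⋃ n : ℤ, ⇑(h.toEquiv ^ n) '' Y) = U := by
    apply Set.Subset.antisymm
    · rintro x hx
      simp only [mem_iUnion] at hx
      obtain ⟨n, z, hz, rfl⟩ := hx
      exact hzpow n z (hYU hz)
    · rintro x hx
      simp only [hU, mem_iUnion] at hx
      obtain ⟨l, j, hj, z, hz, rfl⟩ := hx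
      exact mem_iUnion.2 ⟨(j : ℤ), by rw [hc j]; exact ⟨z, hT0Y l hz, rfl⟩⟩
  have hll : ∀ (l l' : Fin (m + 1)) (z : X), z ∈ T l \ ⋃ i, ⋃ _ : i < l, T i →
      z ∈ T l' \ ⋃ i, ⋃ _ : i < l', T i → l = l' := by
    intro l l' z hz hz'
    by_contra hne
    rcases lt_or_gt_of_ne hne with hlt | hlt
    · exact hz'.2 (mem_iUnion.2 ⟨l, mem_iUnion.2 ⟨hlt, hz.1⟩⟩)
    · exact hz.2 (mem_iUnion.2 ⟨l', mem_iUnion.2 ⟨hlt, hz'.1⟩⟩)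
  have hdisj : ∀ l l' : Fin (m + 1), ∀ j j' : ℕ, j < r l → j' < r l' → (l, j) ≠ (l', j') →
      Disjoint ((⇑h)^[j] '' (T l \ ⋃ i, ⋃ _ : i < l, T i))
        ((⇑h)^[j'] '' (T l' \ ⋃ i, ⋃ _ : i < l', T i)) := by
    intro l l' j j' hj hj' hne
    rw [Set.disjoint_left]
    rintro a ⟨z, hz, rfl⟩ ⟨z', hz', heq⟩
    rcases le_total j j' with hle | hle
    · obtain ⟨hjj, hzz⟩ := rok_nodup h r hTY hfirst l l' j j' hle hj' z hz z' hz' heq.symm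
      have h2 : z ∈ T l' \ ⋃ i, ⋃ _ : i < l', T i := by rw [hzz]; exact hz'
      exact hne (by rw [hjj, hll l l' z hz h2])
    · obtain ⟨hjj, hzz⟩ := rok_nodup h r hTY hfirst l' l j' j hle hj z' hz' z hz heq
      have h2 : z ∈ T l' \ ⋃ i, ⋃ _ : i < l', T i := by rw [← hzz]; exact hz'
      exact hne (by rw [← hjj, hll l l' z hz h2])
  have hZN : (⋃ n : ℤ, ⇑(h.toEquiv ^ n) '' Y)
      = ⋃ n : ℕ, ⋃ _ : n < r (Fin.last m), (⇑h)^[n] '' Y := by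
    apply Set.Subset.antisymm
    · rw [hZU]
      rintro x hx
      simp only [hU, mem_iUnion] at hx
      obtain ⟨l, j, hj, z, hz, rfl⟩ := hx
      exact mem_iUnion.2 ⟨j, mem_iUnion.2
        ⟨lt_of_lt_of_le hj (hrmono (Fin.le_last l)), ⟨z, hT0Y l hz, rfl⟩⟩⟩
    · rintro x hx
      simp only [mem_iUnion] at hx
      obtain ⟨n, hn, z, hz, rfl⟩ := hx
      exact mem_iUnion.2 ⟨(n : ℤ), by rw [hc n]; exact ⟨z, hz, rfl⟩⟩
  have hcomp : IsCompact (⋃ n : ℕ, ⋃ _ : n < r (Fin.last m), (⇑h)^[n] '' Y) :=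
    Set.Finite.isCompact_biUnion (Set.finite_Iio _)
      (fun n _ => hYcomp.image (h.continuous.iterate n))
  exact ⟨hZU, hdisj, hZN, hZN ▸ hcomp⟩
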